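/- Let φ be a scale function on M with upper scaling exponent β2 and constant c_U, let Θ : M × (0,∞) → [1,∞) be Borel measurable with r ↦ Θ(x,r) nondecreasing for each x ∈ M, and let J be a jump kernel on M satisfying the weighted tail condition: there is C_J ≥ 0 with J(x, M \ B(x,r)) ≤ C_J Θ(x,r)/φ(x,r) for all x ∈ M and r ∈ (0,R0). Then for every γ > β2 there exists a constant C > 0, depending only on γ, β2, c_U and C_J, such that ∫_M min(1, d(x,y)/r)^γ J(x,dy) ≤ C Θ(x,r)/φ(x,r) for all x ∈ M and r ∈ (0,R0). -/

import Mathlib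

open MeasureTheory Metric Set
open scoped ENNReal

/-- **Lemma 3.3.** Let `φ` be a scale function with upper scaling exponent `β2` and
constant `cU`, `Θ ≥ 1` a weight nondecreasing in `r`, and `J` a jump kernel satisfying
the weighted tail condition `J(x, B(x,r)ᶜ) ≤ C_J Θ(x,r)/φ(x,r)` for `0 < r < R0`.
Then for every `γ > β2` there is `C > 0` such that
`∫_M min(1, d(x,y)/r)^γ J(x,dy) ≤ C Θ(x,r)/φ(x,r)` for all `x ∈ M`, `0 < r < R0`. -/
theorem tail_condition_integral_bound
    {M : Type*} [MetricSpace M] [MeasurableSpace M] [BorelSpace M] [ProperSpace M]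
    (R0 : ℝ) (hR0 : 0 < R0)
    (hR0diam : ENNReal.ofReal R0 ≤ EMetric.diam (Set.univ : Set M))
    -- scale function φ
    (φ : M → ℝ → ℝ) (β1 β2 cL cU C0 : ℝ)
    (hβ1 : 0 < β1) (hβ12 : β1 ≤ β2) (hcL : 0 < cL) (hcU : 0 < cU) (hC0 : 1 ≤ C0)
    (hφmeas : Measurable (Function.uncurry φ))
    (hφpos : ∀ (x : M) (r : ℝ), 0 < r → 0 < φ x r)
    (hφmono : ∀ x : M, StrictMonoOn (φ x) (Set.Ioi 0))
    (hφcont : ∀ x : M, ContinuousOn (φ x) (Set.Ioi 0))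
    (hφscaleL : ∀ (x : M) (r R : ℝ), 0 < r → r ≤ R → cL * (R / r) ^ β1 ≤ φ x R / φ x r)
    (hφscaleU : ∀ (x : M) (r R : ℝ), 0 < r → r ≤ R → φ x R / φ x r ≤ cU * (R / r) ^ β2)
    (hφcomp : ∀ (x y : M) (r : ℝ), 0 < r → dist x y ≤ r → φ y r ≤ C0 * φ x r)
    -- weight Θ
    (Θ : M → ℝ → ℝ)
    (hΘmeas : Measurable (Function.uncurry Θ))
    (hΘ1 : ∀ (x : M) (r : ℝ), 0 < r → 1 ≤ Θ x r)
    (hΘmono : ∀ x : M, MonotoneOn (Θ x) (Set.Ioi 0))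
    -- jump kernel J and the weighted tail condition
    (J : M → Measure M)
    (hJmeas : ∀ E : Set M, MeasurableSet E → Measurable fun x => J x E)
    (CJ : ℝ) (hCJ : 0 ≤ CJ)
    (hTail : ∀ (x : M) (r : ℝ), 0 < r → r < R0 →
      J x ((ball x r)ᶜ) ≤ ENNReal.ofReal (CJ * Θ x r / φ x r)) :
    ∀ γ : ℝ, β2 < γ → ∃ C : ℝ, 0 < C ∧ ∀ (x : M) (r : ℝ), 0 < r → r < R0 →
      ∫⁻ y, ENNReal.ofReal (min 1 (dist x y / r) ^ γ) ∂(J x) ≤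
        ENNReal.ofReal (C * Θ x r / φ x r) := by
  classical
  intro γ hγ
  have hβ2pos : 0 < β2 := lt_of_lt_of_le hβ1 hβ12
  have hγ0 : 0 < γ := hβ2pos.trans hγ
  set ρ : ℝ := (2:ℝ) ^ (β2 - γ) with hρdef
  have hρpos : 0 < ρ := Real.rpow_pos_of_pos two_pos _
  have hρlt1 : ρ < 1 := Real.rpow_lt_one_of_one_lt_of_neg one_lt_two (by linarith)
  set A : ℝ := (2:ℝ) ^ β2 * (CJ * cU) * (1 - ρ)⁻¹ with hAdef
  have hA0 : 0 ≤ A := by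
    have h2 : (0:ℝ) < (2:ℝ) ^ β2 := Real.rpow_pos_of_pos two_pos _
    have h3 : (0:ℝ) < (1 - ρ)⁻¹ := inv_pos.mpr (by linarith)
    exact mul_nonneg (mul_nonneg h2.le (mul_nonneg hCJ hcU.le)) h3.le
  refine ⟨A + 1, by linarith, ?_⟩
  intro x r hr hrR0
  have hφr : 0 < φ x r := hφpos x r hr
  have hΘr : 1 ≤ Θ x r := hΘ1 x r hr
  have hT0 : 0 ≤ Θ x r / φ x r := div_nonneg (by linarith) hφr.le
  -- the series of indicator functions
  set f : ℕ → M → ℝ≥0∞ := fun k =>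
    ((ball x (r / 2 ^ (k+1)))ᶜ).indicator (fun _ => ENNReal.ofReal ((2:ℝ) ^ (-(k:ℝ) * γ)))
    with hfdef
  have hfmeas : ∀ k, Measurable (f k) := fun k =>
    measurable_const.indicator measurableSet_ball.compl
  -- pointwise bound
  have hpt : ∀ y : M, ENNReal.ofReal (min 1 (dist x y / r) ^ γ) ≤ ∑' k, f k y := by
    intro y
    set d : ℝ := dist x y with hd
    have hd0 : 0 ≤ d := dist_nonneg
    rcases le_or_gt r d with hrd | hrd
    · -- d ≥ r : dominated by the k = 0 term
      have h1 : min 1 (d / r) = 1 := min_eq_left ((one_le_div hr).2 hrd)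
      have hy : y ∈ (ball x (r / 2 ^ (0+1)))ᶜ := by
        simp only [mem_compl_iff, mem_ball, not_lt, dist_comm y x]
        nlinarith
      have : f 0 y = 1 := by
        simp [hfdef, indicator_of_mem hy]
      calc ENNReal.ofReal (min 1 (d / r) ^ γ) = 1 := by
            rw [h1, Real.one_rpow, ENNReal.ofReal_one]
        _ = f 0 y := this.symm
        _ ≤ ∑' k, f k y := ENNReal.le_tsum 0
    · rcases eq_or_lt_of_le hd0 with hd0' | hd0'
      · -- d = 0
        have : min 1 (d / r) = 0 := by
          rw [← hd0']; simp [hr.le]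
        rw [this, Real.zero_rpow hγ0.ne', ENNReal.ofReal_zero]
        exact zero_le'
      · -- 0 < d < r : find the right annulus
        have hP : ∃ n : ℕ, r / 2 ^ (n+1) ≤ d := by
          obtain ⟨n, hn⟩ := pow_unbounded_of_one_lt (r / d) one_lt_two
          refine ⟨n, ?_⟩
          rw [div_le_iff₀ (by positivity)]
          rw [div_lt_iff₀ hd0'] at hn
          have : (2:ℝ) ^ n ≤ 2 ^ (n+1) := by
            apply pow_le_pow_right₀ (by norm_num); omega
          nlinarith
        set k := Nat.find hP with hkdef
        have hk1 : r / 2 ^ (k+1) ≤ d := Nat.find_spec hP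
        have hk2 : d < r / 2 ^ k := by
          rcases Nat.eq_zero_or_pos k with hk0 | hk0
          · rw [hk0]; simpa using hrd
          · have hlt : k - 1 < Nat.find hP := by rw [← hkdef]; omega
            have hmin' := Nat.find_min hP hlt
            push_neg at hmin'
            rwa [Nat.sub_add_cancel hk0] at hmin'
        have hy : y ∈ (ball x (r / 2 ^ (k+1)))ᶜ := by
          simp only [mem_compl_iff, mem_ball, not_lt, dist_comm y x]
          exact hk1
        have hfk : f k y = ENNReal.ofReal ((2:ℝ) ^ (-(k:ℝ) * γ)) := by
          simp [hfdef, indicator_of_mem hy]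
        have hmin : min 1 (d / r) = d / r :=
          min_eq_right (by rw [div_le_one hr]; exact hrd.le)
        have hdr : d / r ≤ ((2:ℝ) ^ k)⁻¹ := by
          rw [div_le_iff₀ hr]
          calc d ≤ r / 2 ^ k := hk2.le
            _ = ((2:ℝ) ^ k)⁻¹ * r := by ring
        have hpow : (((2:ℝ) ^ k)⁻¹) ^ γ = (2:ℝ) ^ (-(k:ℝ) * γ) := by
          rw [← Real.rpow_natCast 2 k, ← Real.rpow_neg (by norm_num : (0:ℝ) ≤ 2),
            ← Real.rpow_mul (by norm_num : (0:ℝ) ≤ 2)]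
        have hle : min 1 (d / r) ^ γ ≤ (2:ℝ) ^ (-(k:ℝ) * γ) := by
          rw [hmin, ← hpow]
          exact Real.rpow_le_rpow (by positivity) hdr hγ0.le
        calc ENNReal.ofReal (min 1 (d / r) ^ γ)
            ≤ ENNReal.ofReal ((2:ℝ) ^ (-(k:ℝ) * γ)) := ENNReal.ofReal_le_ofReal hle
          _ = f k y := hfk.symm
          _ ≤ ∑' k, f k y := ENNReal.le_tsum k
  -- per-term bound for the integrals
  have hterm : ∀ k : ℕ, ∫⁻ y, f k y ∂(J x) ≤
      ENNReal.ofReal ((2:ℝ) ^ β2 * (CJ * cU) * (Θ x r / φ x r)) * ENNReal.ofReal ρ ^ k := by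
    intro k
    set s : ℝ := r / 2 ^ (k+1) with hsdef
    have hs0 : 0 < s := by positivity
    have h2k1 : (1:ℝ) ≤ 2 ^ (k+1) := one_le_pow₀ (by norm_num)
    have hsr : s ≤ r := by
      rw [hsdef]
      exact div_le_self hr.le h2k1
    have hsR0 : s < R0 := lt_of_le_of_lt hsr hrR0
    have htail := hTail x s hs0 hsR0
    have hφs : 0 < φ x s := hφpos x s hs0
    have hrs : r / s = (2:ℝ) ^ (k+1) := by
      rw [hsdef]; field_simp
    have hsc := hφscaleU x s r hs0 hsr
    rw [hrs] at hsc
    have hpoweq : ((2:ℝ) ^ (k+1)) ^ β2 = (2:ℝ) ^ (((k:ℝ)+1) * β2) := by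
      rw [← Real.rpow_natCast 2 (k+1), ← Real.rpow_mul (by norm_num : (0:ℝ) ≤ 2)]
      push_cast
      ring_nf
    rw [hpoweq] at hsc
    -- φ x r ≤ cU * 2^((k+1)β2) * φ x s
    have hφbound : φ x r ≤ cU * (2:ℝ) ^ (((k:ℝ)+1) * β2) * φ x s := by
      rw [div_le_iff₀ hφs] at hsc
      linarith
    have hΘs : Θ x s ≤ Θ x r := hΘmono x hs0 hr hsr
    have hΘs1 : 1 ≤ Θ x s := hΘ1 x s hs0
    have hreal : CJ * Θ x s / φ x s ≤
        CJ * cU * (2:ℝ) ^ (((k:ℝ)+1) * β2) * (Θ x r / φ x r) := by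
      have h2p : (0:ℝ) < (2:ℝ) ^ (((k:ℝ)+1) * β2) := Real.rpow_pos_of_pos two_pos _
      rw [div_le_iff₀ hφs,
        show CJ * cU * (2:ℝ) ^ (((k:ℝ)+1) * β2) * (Θ x r / φ x r) * φ x s =
          CJ * cU * (2:ℝ) ^ (((k:ℝ)+1) * β2) * Θ x r * φ x s / φ x r by ring,
        le_div_iff₀ hφr]
      calc CJ * Θ x s * φ x r
          ≤ CJ * Θ x r * (cU * (2:ℝ) ^ (((k:ℝ)+1) * β2) * φ x s) :=
            mul_le_mul (mul_le_mul_of_nonneg_left hΘs hCJ) hφbound hφr.le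
              (mul_nonneg hCJ (by linarith))
        _ = CJ * cU * (2:ℝ) ^ (((k:ℝ)+1) * β2) * Θ x r * φ x s := by ring
    have hint : ∫⁻ y, f k y ∂(J x) =
        ENNReal.ofReal ((2:ℝ) ^ (-(k:ℝ) * γ)) * J x ((ball x s)ᶜ) := by
      rw [hfdef]
      exact lintegral_indicator_const measurableSet_ball.compl _
    rw [hint]
    have hJb : J x ((ball x s)ᶜ) ≤
        ENNReal.ofReal (CJ * cU * (2:ℝ) ^ (((k:ℝ)+1) * β2) * (Θ x r / φ x r)) :=
      htail.trans (ENNReal.ofReal_le_ofReal hreal)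
    calc ENNReal.ofReal ((2:ℝ) ^ (-(k:ℝ) * γ)) * J x ((ball x s)ᶜ)
        ≤ ENNReal.ofReal ((2:ℝ) ^ (-(k:ℝ) * γ)) *
          ENNReal.ofReal (CJ * cU * (2:ℝ) ^ (((k:ℝ)+1) * β2) * (Θ x r / φ x r)) :=
          mul_le_mul_right hJb _
      _ = ENNReal.ofReal ((2:ℝ) ^ (-(k:ℝ) * γ) *
          (CJ * cU * (2:ℝ) ^ (((k:ℝ)+1) * β2) * (Θ x r / φ x r))) :=
          (ENNReal.ofReal_mul (by positivity)).symm
      _ = ENNReal.ofReal ((2:ℝ) ^ β2 * (CJ * cU) * (Θ x r / φ x r) * ρ ^ k) := by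
          congr 1
          have hexp : (2:ℝ) ^ (-(k:ℝ) * γ) * (2:ℝ) ^ (((k:ℝ)+1) * β2) = (2:ℝ) ^ β2 * ρ ^ k := by
            rw [hρdef, ← Real.rpow_natCast ((2:ℝ) ^ (β2 - γ)) k,
              ← Real.rpow_mul (by norm_num : (0:ℝ) ≤ 2),
              ← Real.rpow_add two_pos, ← Real.rpow_add two_pos]
            congr 1
            ring
          linear_combination (CJ * cU * (Θ x r / φ x r)) * hexp
      _ = ENNReal.ofReal ((2:ℝ) ^ β2 * (CJ * cU) * (Θ x r / φ x r)) * ENNReal.ofReal ρ ^ k := by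
          rw [ENNReal.ofReal_mul (by positivity), ENNReal.ofReal_pow hρpos.le]
  -- put everything together
  calc ∫⁻ y, ENNReal.ofReal (min 1 (dist x y / r) ^ γ) ∂(J x)
      ≤ ∫⁻ y, ∑' k, f k y ∂(J x) := lintegral_mono hpt
    _ = ∑' k, ∫⁻ y, f k y ∂(J x) := lintegral_tsum fun k => (hfmeas k).aemeasurable
    _ ≤ ∑' k : ℕ, ENNReal.ofReal ((2:ℝ) ^ β2 * (CJ * cU) * (Θ x r / φ x r)) *
        ENNReal.ofReal ρ ^ k := ENNReal.tsum_le_tsum hterm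
    _ = ENNReal.ofReal ((2:ℝ) ^ β2 * (CJ * cU) * (Θ x r / φ x r)) *
        (1 - ENNReal.ofReal ρ)⁻¹ := by
        rw [ENNReal.tsum_mul_left, ENNReal.tsum_geometric]
    _ = ENNReal.ofReal ((2:ℝ) ^ β2 * (CJ * cU) * (Θ x r / φ x r)) *
        ENNReal.ofReal ((1 - ρ)⁻¹) := by
        congr 1
        rw [ENNReal.ofReal_inv_of_pos (by linarith), ENNReal.ofReal_sub _ hρpos.le,
          ENNReal.ofReal_one]
    _ = ENNReal.ofReal ((2:ℝ) ^ β2 * (CJ * cU) * (Θ x r / φ x r) * (1 - ρ)⁻¹) :=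
        (ENNReal.ofReal_mul (by positivity)).symm
    _ ≤ ENNReal.ofReal ((A + 1) * Θ x r / φ x r) := by
        apply ENNReal.ofReal_le_ofReal
        rw [hAdef, mul_div_assoc]
        nlinarith
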